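/- Let f: ℝ^d → ℝ be a proper convex continuous function, let x_i, y_i, z_i for i ≥ 0 be the iterates of AGD+, and let w ∈ 𝒳 be arbitrary. Then for all k ≥ 0, f(y_k) − f(w) ≤ G_k, where G_k := f(y_k) − (1/A_k) Σ_{i=0}^k a_i (f(x_i) + ⟨g_i, v_k − x_i⟩) + (1/A_k) Σ_{i=0}^k E_i^b − (1/(2A_k)) ‖v_k − x_0‖₂² + (1/(2A_k)) ‖w − x_0‖₂². -/

import Mathlib

open MeasureTheory Metric Real Set
open scoped RealInnerProductSpace ENNReal NNReal

noncomputable section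

abbrev Eu (d : ℕ) := EuclideanSpace ℝ (Fin d)

/-- The uniform probability measure on a set `s` (normalized restriction of Lebesgue measure). -/
def unifOn {d : ℕ} (s : Set (Eu d)) : Measure (Eu d) :=
  (volume s)⁻¹ • volume.restrict s

/-- The locally smoothed function `f_r`: the average of `f` over a Euclidean ball of radius `r`. -/
def smoothed {d : ℕ} (f : Eu d → ℝ) (r : ℝ) (x : Eu d) : ℝ :=
  ⨍ u in Metric.closedBall (0 : Eu d) r, f (x + u)

/-- The uniform probability measure on the unit Euclidean sphere. -/
def unifSphere (d : ℕ) : Measure (Metric.sphere (0 : Eu d) 1) :=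
  ((volume : Measure (Eu d)).toSphere Set.univ)⁻¹ • (volume : Measure (Eu d)).toSphere

/-- `γ` is a measurable selection of the subdifferential of the locally Lipschitz function `f`:
it is measurable and agrees with the gradient at every point of differentiability. -/
def IsGradSelection {d : ℕ} (f : Eu d → ℝ) (γ : Eu d → Eu d) : Prop :=
  Measurable γ ∧ ∀ x, DifferentiableAt ℝ f x → γ x = gradient f x

/-- Bounded maximum local variation of the subgradient (BVG_max) at radius `r` with constant `L`. -/
def BVGmax {d : ℕ} (γ : Eu d → Eu d) (r L : ℝ) : Prop :=
  ∀ x : Eu d, ∀ u ∈ Metric.closedBall (0 : Eu d) 1, ‖γ (x + r • u) - γ x‖ ≤ L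

/-- Bounded mean local oscillation of the subgradient (BVG_avg) at radius `r` with constant `L`. -/
def BVGavg {d : ℕ} (f : Eu d → ℝ) (γ : Eu d → Eu d) (r L : ℝ) : Prop :=
  ∀ ρ : ℝ, 0 < ρ → ρ ≤ r → ∀ x : Eu d,
    ∫ u : Metric.sphere (0 : Eu d) 1,
      ‖γ (x + ρ • (u : Eu d)) - gradient (smoothed f r) x‖ ∂(unifSphere d) ≤ L

/-- The Goldstein `δ`-subdifferential of `f` at `x`. -/
def goldstein {d : ℕ} (f : Eu d → ℝ) (δ : ℝ) (x : Eu d) : Set (Eu d) :=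
  convexHull ℝ {g | ∃ y ∈ Metric.closedBall x δ, DifferentiableAt ℝ f y ∧ gradient f y = g}

/-- The mean width of a set `K ⊆ ℝ^d`. -/
def meanWidth {d : ℕ} (K : Set (Eu d)) : ℝ :=
  ∫ u : Metric.sphere (0 : Eu d) 1,
    sSup ((fun p : Eu d × Eu d => ⟪(u : Eu d), p.1 - p.2⟫) '' (K ×ˢ K)) ∂(unifSphere d)

/-- `proj` is the Euclidean projection onto the set `X`. -/
def IsProjOn {d : ℕ} (X : Set (Eu d)) (proj : Eu d → Eu d) : Prop :=
  ∀ z, proj z ∈ X ∧ ∀ w ∈ X, ‖z - proj z‖ ≤ ‖z - w‖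

/-- The AGD+ iterate recurrences with step sizes `a` (cumulative sums `A`),
gradient estimates `g` and projection `proj` onto the feasible set. -/
def AGDPlus {d : ℕ} (proj : Eu d → Eu d) (a A : ℕ → ℝ) (g x y z : ℕ → Eu d) : Prop :=
  (∀ k, A k = ∑ i ∈ Finset.range (k + 1), a i) ∧
  z 0 = x 0 - a 0 • g 0 ∧ y 0 = proj (z 0) ∧
  (∀ k, x (k + 1) = (A k / A (k + 1)) • y k + (a (k + 1) / A (k + 1)) • proj (z k)) ∧
  (∀ k, z (k + 1) = z k - a (k + 1) • g (k + 1)) ∧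
  (∀ k, y (k + 1) = (A k / A (k + 1)) • y k + (a (k + 1) / A (k + 1)) • proj (z (k + 1)))

/-- The bias error term `E_k^b`. -/
def Ebias {d : ℕ} (γ : Eu d → Eu d) (a : ℕ → ℝ) (g x : ℕ → Eu d) (w : Eu d) (k : ℕ) : ℝ :=
  a k * ⟪g k - γ (x k), w - x k⟫

/-- The variance error term `E_k^v`. -/
def Evar {d : ℕ} (γ : Eu d → Eu d) (a : ℕ → ℝ) (g x v : ℕ → Eu d) (k : ℕ) : ℝ :=
  a k * ⟪γ (x k) - g k, v k - x k⟫

/-- The smoothness error term `E_k^s`. -/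
def Esmooth {d : ℕ} (f : Eu d → ℝ) (γ : Eu d → Eu d) (a A : ℕ → ℝ) (x y : ℕ → Eu d) (k : ℕ) : ℝ :=
  A k * (f (y k) - f (x k) - ⟪γ (x k), y k - x k⟫ - (A k / (2 * (a k) ^ 2)) * ‖y k - x k‖ ^ 2)

/-- The gap estimate `G_k`. -/
def gapG {d : ℕ} (f : Eu d → ℝ) (γ : Eu d → Eu d) (a A : ℕ → ℝ) (g x y v : ℕ → Eu d)
    (w : Eu d) (k : ℕ) : ℝ :=
  f (y k) - (A k)⁻¹ * (∑ i ∈ Finset.range (k + 1), a i * (f (x i) + ⟪g i, v k - x i⟫))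
    + (A k)⁻¹ * (∑ i ∈ Finset.range (k + 1), Ebias γ a g x w i)
    - (1 / (2 * A k)) * ‖v k - x 0‖ ^ 2 + (1 / (2 * A k)) * ‖w - x 0‖ ^ 2



lemma proj_inner {d : ℕ} {X : Set (Eu d)} (hXne : X.Nonempty) (hXcx : Convex ℝ X)
    {proj : Eu d → Eu d} (hproj : IsProjOn X proj) (z : Eu d) {w : Eu d} (hw : w ∈ X) :
    ⟪z - proj z, w - proj z⟫ ≤ 0 := by
  have hmem := (hproj z).1
  have hmin := (hproj z).2
  have : (‖z - proj z‖ = ⨅ w : X, ‖z - w‖) := by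
    haveI : Nonempty X := hXne.to_subtype
    refine le_antisymm ?_ ?_
    · exact le_ciInf fun ⟨w, hw⟩ => hmin w hw
    · exact ciInf_le ⟨0, fun _ ⟨_, h⟩ => h ▸ norm_nonneg _⟩ (⟨proj z, hmem⟩ : X)
  exact ((norm_eq_iInf_iff_real_inner_le_zero hXcx hmem).mp this) w hw

/-- the gap estimate `G_k` upper bounds `f(y_k) - f(w)` for AGD+. -/
theorem statement8 (d : ℕ) (f : Eu d → ℝ) (hconv : ConvexOn ℝ Set.univ f)
    (hcont : Continuous f)
    (γ : Eu d → Eu d) (hsub : ∀ x y : Eu d, f x + ⟪γ x, y - x⟫ ≤ f y)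
    (X : Set (Eu d)) (hXne : X.Nonempty) (hXcl : IsClosed X) (hXcx : Convex ℝ X)
    (proj : Eu d → Eu d) (hproj : IsProjOn X proj)
    (a A : ℕ → ℝ) (ha : ∀ k, 0 < a k)
    (g x y z : ℕ → Eu d) (hx0 : x 0 ∈ X)
    (hAGD : AGDPlus proj a A g x y z)
    (w : Eu d) (hw : w ∈ X) (k : ℕ) :
    f (y k) - f w ≤ gapG f γ a A g x y (fun i => proj (z i)) w k := by
  obtain ⟨hA, hz0, hy0, hxr, hzr, hyr⟩ := hAGD
  set v : ℕ → Eu d := fun i => proj (z i) with hv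
  have hApos : 0 < A k := by
    rw [hA]; exact Finset.sum_pos (fun i _ => ha i) Finset.nonempty_range_add_one
  have hzk : ∀ n, z n = x 0 - ∑ i ∈ Finset.range (n + 1), a i • g i := by
    intro n; induction n with
    | zero => simpa using hz0
    | succ n ih =>
      rw [hzr n, ih, Finset.sum_range_succ _ (n + 1)]; abel
  have hp : ⟪z k - v k, w - v k⟫ ≤ 0 := proj_inner hXne hXcx hproj (z k) hw
  have hsum1 : ∀ i, a i * (f (x i) + ⟪g i, v k - x i⟫) - Ebias γ a g x w i
      = a i * (f (x i) + ⟪γ (x i), w - x i⟫) + a i * ⟪g i, v k - w⟫ := by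
    intro i
    simp only [Ebias, inner_sub_left, inner_sub_right]
    ring
  have hsub' : ∀ i, a i * (f (x i) + ⟪γ (x i), w - x i⟫) ≤ a i * f w := fun i =>
    mul_le_mul_of_nonneg_left (hsub (x i) w) (ha i).le
  have hS : ∑ i ∈ Finset.range (k + 1), a i * ⟪g i, v k - w⟫ = ⟪x 0 - z k, v k - w⟫ := by
    have h1 : x 0 - z k = ∑ i ∈ Finset.range (k + 1), a i • g i := by
      rw [hzk k]; abel
    rw [h1, sum_inner]
    exact Finset.sum_congr rfl fun i _ => (real_inner_smul_left _ _ _).symm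
  have hquad : ⟪x 0 - z k, v k - w⟫ + (1 / 2) * ‖v k - x 0‖ ^ 2 - (1 / 2) * ‖w - x 0‖ ^ 2
      = ⟪z k - v k, w - v k⟫ - (1 / 2) * ‖w - v k‖ ^ 2 := by
    simp only [← real_inner_self_eq_norm_sq, inner_sub_left, inner_sub_right,
      real_inner_comm (x 0)]
    simp only [real_inner_comm (v k) (w), real_inner_comm (v k) (z k),
      real_inner_comm (w) (z k)]
    ring
  have key : (∑ i ∈ Finset.range (k + 1), a i * (f (x i) + ⟪g i, v k - x i⟫))
      - (∑ i ∈ Finset.range (k + 1), Ebias γ a g x w i)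
      + (1 / 2) * ‖v k - x 0‖ ^ 2 - (1 / 2) * ‖w - x 0‖ ^ 2 ≤ A k * f w := by
    have h2 : (∑ i ∈ Finset.range (k + 1), a i * (f (x i) + ⟪g i, v k - x i⟫))
        - (∑ i ∈ Finset.range (k + 1), Ebias γ a g x w i)
        = (∑ i ∈ Finset.range (k + 1), a i * (f (x i) + ⟪γ (x i), w - x i⟫))
          + ⟪x 0 - z k, v k - w⟫ := by
      rw [← hS, ← Finset.sum_add_distrib, ← Finset.sum_sub_distrib]
      exact Finset.sum_congr rfl fun i _ => hsum1 i
    have h3 : (∑ i ∈ Finset.range (k + 1), a i * (f (x i) + ⟪γ (x i), w - x i⟫))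
        ≤ A k * f w := by
      rw [hA, Finset.sum_mul]
      exact Finset.sum_le_sum fun i _ => hsub' i
    have h4 : (0:ℝ) ≤ ‖w - v k‖ ^ 2 := by positivity
    linarith [hquad, hp, h3, h2.le, h2.ge]
  have hmul := mul_le_mul_of_nonneg_left key (inv_nonneg.mpr hApos.le)
  have hAc : (A k)⁻¹ * (A k * f w) = f w := by
    field_simp
  rw [hAc] at hmul
  unfold gapG
  have h2A : 1 / (2 * A k) = (A k)⁻¹ * (1 / 2) := by
    field_simp
  rw [h2A]
  nlinarith [hmul]

end
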